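/- Let R > 0 and let {E_h} be a sequence of sets in 𝒰_R ⊆ ℝⁿ that is equibounded, i.e. there exists M > 0 with E_h ⊆ B(0,M) for every h. Then there exist a set E ∈ 𝒰_R and a subsequence {E_{h_j}} such that E_{h_j} →K E in the sense of Kuratowski and χ_{E_{h_j}} → χ_E in L¹(ℝⁿ). -/

import Mathlib

open Set Metric MeasureTheory Filter Topology ENNReal NNReal

noncomputable section

abbrev En (n : ℕ) := EuclideanSpace ℝ (Fin n)

def sphereCond (n : ℕ) (R : ℝ) (E : Set (En n)) : Prop :=
  ∀ p ∈ frontier E, ∃ p' p'' : En n, dist p p' = R ∧ dist p p'' = R ∧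
    ball p' R ⊆ E ∧ ball p'' R ∩ E = ∅

variable {n : ℕ}

/-- Projection of an exterior point to the frontier of a compact set. -/
lemma exists_frontier_infDist {S : Set (En n)} (hc : IsCompact S) (hne : S.Nonempty)
    {z : En n} (hz : z ∉ S) : ∃ w ∈ frontier S, dist z w = infDist z S := by
  obtain ⟨w, hwS, hwd⟩ := hc.exists_infDist_eq_dist hne z
  have hdpos : 0 < infDist z S := (hc.isClosed.notMem_iff_infDist_pos hne).1 hz
  refine ⟨w, ?_, hwd.symm⟩
  rw [frontier_eq_closure_inter_closure]
  refine ⟨subset_closure hwS, ?_⟩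
  rw [Metric.mem_closure_iff]
  intro η hη
  set d := infDist z S with hd
  set δ : ℝ := min (η / (2 * d)) 1 with hδ
  have hδ0 : 0 < δ := lt_min (div_pos hη (by positivity)) one_pos
  have hδ1 : δ ≤ 1 := min_le_right _ _
  have hzw : dist z w = d := hwd.symm
  refine ⟨z + (1 - δ) • (w - z), ?_, ?_⟩
  · -- not in S
    intro hmem
    have h1 : dist z (z + (1 - δ) • (w - z)) = (1 - δ) * d := by
      rw [dist_eq_norm]
      have : z - (z + (1 - δ) • (w - z)) = (1 - δ) • (z - w) := by module
      rw [this, norm_smul, Real.norm_eq_abs, abs_of_nonneg (by linarith), ← dist_eq_norm, hzw]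
    have h2 : d ≤ dist z (z + (1 - δ) • (w - z)) := infDist_le_dist_of_mem hmem
    rw [h1] at h2
    nlinarith
  · -- close to w
    have h3 : dist w (z + (1 - δ) • (w - z)) = δ * d := by
      rw [dist_eq_norm]
      have : w - (z + (1 - δ) • (w - z)) = δ • (w - z) := by module
      rw [this, norm_smul, Real.norm_eq_abs, abs_of_nonneg hδ0.le, ← dist_eq_norm,
        dist_comm w z, hzw]
    rw [h3]
    calc δ * d ≤ (η / (2 * d)) * d := by
          apply mul_le_mul_of_nonneg_right (min_le_left _ _) hdpos.le
      _ = η / 2 := by field_simp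
      _ < η := by linarith

/-- Tangent balls in the Hausdorff limit. -/
lemma tangent_balls {R : ℝ} (hR : 0 < R) {S : ℕ → Set (En n)} {E : Set (En n)}
    (hScl : ∀ j, IsClosed (S j)) (hSsc : ∀ j, sphereCond n R (S j))
    (hEcl : IsClosed E) (hEne : E.Nonempty)
    (ε : ℕ → ℝ)
    (hε1 : ∀ j, ∀ x ∈ S j, infDist x E ≤ ε j)
    (hε2 : ∀ j, ∀ x ∈ E, infDist x (S j) ≤ ε j)
    {x : En n}
    (hw : ∀ k : ℕ, ∃ j, ε j ≤ 1 / (k + 1) ∧ ∃ w ∈ frontier (S j), dist w x ≤ 1 / (k + 1)) :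
    (∃ q, dist x q = R ∧ ball q R ⊆ E) ∧ (∃ q, dist x q = R ∧ ball q R ∩ E = ∅) := by
  choose j hjε w hwf hwx using hw
  choose c c' hc1 hc2 hc3 hc4 using fun k => hSsc (j k) (w k) (hwf k)
  have hfr : ∀ k, w k ∈ S (j k) := fun k => (hScl (j k)).frontier_subset (hwf k)
  have hone : ∀ k : ℕ, (0:ℝ) < 1 / (k + 1) := fun k => by positivity
  have hkle : ∀ k : ℕ, 1 / ((k:ℝ) + 1) ≤ 1 := fun k => by
    rw [div_le_one (by positivity)]; linarith [Nat.cast_nonneg (α := ℝ) k]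
  -- boundedness of centers
  have hcb : ∀ k, c k ∈ closedBall x (R + 1) := by
    intro k
    rw [mem_closedBall]
    calc dist (c k) x ≤ dist (c k) (w k) + dist (w k) x := dist_triangle _ _ _
      _ ≤ R + 1 := by
          have := hc1 k; rw [dist_comm] at this
          have := hwx k
          have := hkle k
          linarith
  have hcb' : ∀ k, c' k ∈ closedBall x (R + 1) := by
    intro k
    rw [mem_closedBall]
    calc dist (c' k) x ≤ dist (c' k) (w k) + dist (w k) x := dist_triangle _ _ _
      _ ≤ R + 1 := by
          have := hc2 k; rw [dist_comm] at this
          have := hwx k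
          have := hkle k
          linarith
  obtain ⟨q, -, σ₀, hσ₀, hq0⟩ := tendsto_subseq_of_bounded isBounded_closedBall hcb
  obtain ⟨q', -, σ₁, hσ₁, hq1⟩ :=
    tendsto_subseq_of_bounded isBounded_closedBall (fun k => hcb' (σ₀ k))
  set τ : ℕ → ℕ := σ₀ ∘ σ₁ with hτ
  have hτmono : StrictMono τ := hσ₀.comp hσ₁
  have hτge : ∀ k, k ≤ τ k := fun k => hτmono.le_apply
  have hqc : Tendsto (fun k => c (τ k)) atTop (𝓝 q) := hq0.comp hσ₁.tendsto_atTop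
  have hqc' : Tendsto (fun k => c' (τ k)) atTop (𝓝 q') := hq1
  -- w ∘ τ tends to x
  have hwx2 : Tendsto (fun k => w (τ k)) atTop (𝓝 x) := by
    rw [tendsto_iff_dist_tendsto_zero]
    apply squeeze_zero (fun k => dist_nonneg) (g := fun k : ℕ => 1 / ((k:ℝ) + 1))
    · intro k
      calc dist (w (τ k)) x ≤ 1 / ((τ k : ℝ) + 1) := hwx (τ k)
        _ ≤ 1 / ((k:ℝ) + 1) := by
            apply one_div_le_one_div_of_le (by positivity)
            have := hτge k
            push_cast
            exact_mod_cast Nat.succ_le_succ this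
    · exact tendsto_one_div_add_atTop_nhds_zero_nat
  have hεsmall : ∀ k, ε (j (τ k)) ≤ 1 / ((k:ℝ) + 1) := by
    intro k
    calc ε (j (τ k)) ≤ 1 / ((τ k : ℝ) + 1) := hjε (τ k)
      _ ≤ 1 / ((k:ℝ) + 1) := by
          apply one_div_le_one_div_of_le (by positivity)
          have := hτge k
          push_cast
          exact_mod_cast Nat.succ_le_succ this
  constructor
  · -- interior tangent ball
    refine ⟨q, ?_, ?_⟩
    · have h1 : Tendsto (fun k => dist (w (τ k)) (c (τ k))) atTop (𝓝 (dist x q)) :=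
        hwx2.dist hqc
      have h2 : (fun k => dist (w (τ k)) (c (τ k))) = fun _ => R := funext fun k => hc1 (τ k)
      rw [h2] at h1
      exact (tendsto_nhds_unique tendsto_const_nhds h1).symm
    · intro u hu
      have h1 : Tendsto (fun k => dist u (c (τ k))) atTop (𝓝 (dist u q)) :=
        tendsto_const_nhds.dist hqc
      have h2 : ∀ᶠ k in atTop, dist u (c (τ k)) < R :=
        h1.eventually_lt_const hu
      have h3 : ∀ᶠ k : ℕ in atTop, infDist u E ≤ 1 / ((k:ℝ) + 1) := by
        filter_upwards [h2] with k hk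
        exact le_trans (hε1 _ u (hc3 (τ k) hk)) (hεsmall k)
      have h4 : infDist u E ≤ 0 :=
        ge_of_tendsto tendsto_one_div_add_atTop_nhds_zero_nat h3
      have h5 : infDist u E = 0 := le_antisymm h4 infDist_nonneg
      have := (mem_closure_iff_infDist_zero hEne).2 h5
      rwa [hEcl.closure_eq] at this
  · -- exterior tangent ball
    refine ⟨q', ?_, ?_⟩
    · have h1 : Tendsto (fun k => dist (w (τ k)) (c' (τ k))) atTop (𝓝 (dist x q')) :=
        hwx2.dist hqc'
      have h2 : (fun k => dist (w (τ k)) (c' (τ k))) = fun _ => R := funext fun k => hc2 (τ k)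
      rw [h2] at h1
      exact (tendsto_nhds_unique tendsto_const_nhds h1).symm
    · by_contra hcon
      obtain ⟨u, hu1, hu2⟩ := nonempty_iff_ne_empty.2 hcon
      set ρ : ℝ := R - dist u q' with hρ
      have hρ0 : 0 < ρ := by simp only [hρ]; rw [mem_ball] at hu1; linarith
      have h1 : Tendsto (fun k => dist (c' (τ k)) q') atTop (𝓝 0) := by
        rw [← tendsto_iff_dist_tendsto_zero] at *
        exact hqc'
      have h2 : ∀ᶠ k in atTop, dist (c' (τ k)) q' < ρ / 3 :=
        h1.eventually_lt_const (by linarith)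
      have h3 : ∀ᶠ k : ℕ in atTop, 1 / ((k:ℝ) + 1) < ρ / 3 :=
        tendsto_one_div_add_atTop_nhds_zero_nat.eventually_lt_const (by linarith)
      obtain ⟨k, hk2, hk3⟩ := (h2.and h3).exists
      have hSne : (S (j (τ k))).Nonempty := ⟨w (τ k), hfr (τ k)⟩
      have h4 : infDist u (S (j (τ k))) < ρ / 2 :=
        lt_of_le_of_lt (le_trans (hε2 _ u hu2) (hεsmall k)) (by linarith)
      obtain ⟨u', hu'S, hu'd⟩ := (infDist_lt_iff hSne).1 h4
      have h5 : dist u' (c' (τ k)) < R := by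
        calc dist u' (c' (τ k)) ≤ dist u' u + dist u q' + dist q' (c' (τ k)) :=
              dist_triangle4 _ _ _ _
          _ < ρ / 2 + (R - ρ) + ρ / 3 := by
              rw [dist_comm u' u, dist_comm q' _]
              have : dist u q' = R - ρ := by simp [hρ]
              linarith [hu'd, hk2, this.le, this.ge]
          _ < R := by linarith
      have : u' ∈ ball (c' (τ k)) R ∩ S (j (τ k)) := ⟨mem_ball.2 h5, hu'S⟩
      rw [hc4 (τ k)] at this
      exact this


lemma bad_null {R : ℝ} (hR : 0 < R) (hn : 1 ≤ n) {E : Set (En n)} (hEm : MeasurableSet E) :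
    volume {x : En n | x ∈ E ∧ ∃ q : En n, dist x q = R ∧ ball q R ∩ E = ∅} = 0 := by
  set κ : ℝ≥0∞ := ENNReal.ofReal ((1 / 4 : ℝ) ^ n) with hκ
  have hκ0 : κ ≠ 0 := by
    simp only [hκ, ne_eq, ENNReal.ofReal_eq_zero, not_le]
    positivity
  have hκ1 : κ ≤ 1 := by
    rw [hκ, ← ENNReal.ofReal_one]
    exact ENNReal.ofReal_le_ofReal (pow_le_one₀ (by norm_num) (by norm_num))
  -- key ratio bound
  have key : ∀ x : En n, (∃ q : En n, dist x q = R ∧ ball q R ∩ E = ∅) →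
      ∀ r ∈ Ioc (0:ℝ) R,
      volume (E ∩ closedBall x r) / volume (closedBall x r) ≤ 1 - κ := by
    intro x ⟨q, hq, hqE⟩ r ⟨hr0, hrR⟩
    set m : En n := x + (r / (2 * R)) • (q - x) with hm
    have hmx : dist m x = r / 2 := by
      rw [dist_eq_norm]
      have h1 : m - x = (r / (2 * R)) • (q - x) := by simp [hm]
      rw [h1, norm_smul, Real.norm_eq_abs, abs_of_nonneg (by positivity), ← dist_eq_norm,
        dist_comm q x, hq]
      field_simp
    have hmq : dist m q = R - r / 2 := by
      rw [dist_eq_norm]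
      have h1 : m - q = (1 - r / (2 * R)) • (x - q) := by simp only [hm]; module
      rw [h1, norm_smul, Real.norm_eq_abs, abs_of_nonneg (by
        have : r / (2 * R) ≤ 1 := by
          rw [div_le_one (by positivity)]; linarith
        linarith), ← dist_eq_norm, hq]
      field_simp
    have hball : ball m (r / 4) ⊆ closedBall x r \ E := by
      intro y hy
      rw [mem_ball] at hy
      constructor
      · rw [mem_closedBall]
        calc dist y x ≤ dist y m + dist m x := dist_triangle _ _ _
          _ ≤ r / 4 + r / 2 := by linarith [hy.le, hmx.le]
          _ ≤ r := by linarith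
      · intro hyE
        have : y ∈ ball q R := by
          rw [mem_ball]
          calc dist y q ≤ dist y m + dist m q := dist_triangle _ _ _
            _ < r / 4 + (R - r / 2) := by linarith [hy, hmq.le, hmq.ge]
            _ < R := by linarith
        have : y ∈ ball q R ∩ E := ⟨this, hyE⟩
        rw [hqE] at this
        exact this
    -- measures
    have hfr : Module.finrank ℝ (En n) = n := finrank_euclideanSpace_fin
    have hA : volume (closedBall x r) = ENNReal.ofReal (r ^ n) * volume (ball (0 : En n) 1) := by
      rw [Measure.addHaar_closedBall volume x hr0.le, hfr]
    have hB : volume (ball m (r / 4)) = κ * volume (closedBall x r) := by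
      rw [Measure.addHaar_ball_of_pos volume m (by positivity : (0:ℝ) < r / 4), hfr, hA, hκ]
      rw [← mul_assoc, ← ENNReal.ofReal_mul (by positivity)]
      congr 2
      rw [div_pow, div_pow, one_pow]
      ring
    have hApos : volume (closedBall x r) ≠ 0 := (measure_closedBall_pos volume x hr0).ne'
    have hAtop : volume (closedBall x r) ≠ ⊤ := measure_closedBall_lt_top.ne
    -- disjoint union bound
    have hdisj : Disjoint (E ∩ closedBall x r) (ball m (r / 4)) := by
      rw [Set.disjoint_right]
      intro y hy
      exact fun h => (hball hy).2 h.1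
    have hsub : (E ∩ closedBall x r) ∪ ball m (r / 4) ⊆ closedBall x r :=
      union_subset inter_subset_right (fun y hy => (hball hy).1)
    have hmeas : volume (E ∩ closedBall x r) + volume (ball m (r / 4)) ≤
        volume (closedBall x r) := by
      rw [← measure_union hdisj measurableSet_ball]
      exact measure_mono hsub
    rw [hB] at hmeas
    have hle : volume (E ∩ closedBall x r) ≤ (1 - κ) * volume (closedBall x r) := by
      have h1 : (1 - κ) * volume (closedBall x r) + κ * volume (closedBall x r) =
          volume (closedBall x r) := by
        rw [← add_mul, tsub_add_cancel_of_le hκ1, one_mul]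
      have h2 : volume (E ∩ closedBall x r) + κ * volume (closedBall x r) ≤
          (1 - κ) * volume (closedBall x r) + κ * volume (closedBall x r) := by
        rw [h1]; exact hmeas
      exact ENNReal.le_of_add_le_add_right
        (by exact ENNReal.mul_ne_top (by simp [hκ]) hAtop) h2
    rw [ENNReal.div_le_iff hApos hAtop]
    exact hle
  -- apply Besicovitch density theorem
  have hae := Besicovitch.ae_tendsto_measure_inter_div_of_measurableSet volume hEm
  refine measure_mono_null ?_ (ae_iff.1 hae)
  rintro x ⟨hxE, hq⟩
  simp only [mem_setOf_eq]
  intro hT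
  rw [Set.indicator_of_mem hxE, Pi.one_apply] at hT
  have h1κ : (1:ℝ≥0∞) - κ < 1 := ENNReal.sub_lt_self one_ne_top one_ne_zero hκ0
  obtain ⟨r, hrT, hrI⟩ :=
    ((hT.eventually (Ioi_mem_nhds h1κ)).and
      (eventually_of_mem (Ioc_mem_nhdsGT hR) (fun y hy => hy))).exists
  exact absurd (key x hq r hrI) (not_le.2 hrT)

def UR (n : ℕ) (R : ℝ) : Set (Set (En n)) :=
  {E | IsClosed E ∧ Bornology.IsBounded E ∧ sphereCond n R E}

def KConv {X : Type*} [MetricSpace X] (F : ℕ → Set X) (F₀ : Set X) : Prop :=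
  (∀ (p : X) (φ : ℕ → ℕ) (x : ℕ → X), StrictMono φ → (∀ k, x k ∈ F (φ k)) →
    Tendsto x atTop (𝓝 p) → p ∈ F₀) ∧
  (∀ p ∈ F₀, ∃ x : ℕ → X, (∀ h, x h ∈ F h) ∧ Tendsto x atTop (𝓝 p))

def L1Conv {n : ℕ} (F : ℕ → Set (En n)) (E : Set (En n)) : Prop :=
  Tendsto (fun h => ∫ x, |(F h).indicator (fun _ => (1:ℝ)) x - E.indicator (fun _ => (1:ℝ)) x|)
    atTop (𝓝 0)

theorem compactness_UR (n : ℕ) (hn : 2 ≤ n) (R : ℝ) (hR : 0 < R)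
    (Eh : ℕ → Set (En n)) (hEh : ∀ h, Eh h ∈ UR n R)
    (M : ℝ) (hM : 0 < M) (hbd : ∀ h, Eh h ⊆ ball 0 M) :
    ∃ E ∈ UR n R, ∃ φ : ℕ → ℕ, StrictMono φ ∧
      KConv (fun j => Eh (φ j)) E ∧ L1Conv (fun j => Eh (φ j)) E := by
  classical
  by_cases hinf : {h : ℕ | Eh h = ∅}.Infinite
  · -- degenerate case: infinitely many empty sets
    haveI := hinf.to_subtype
    set φ : ℕ → ℕ := ⇑(Nat.orderEmbeddingOfSet {h : ℕ | Eh h = ∅}) with hφdef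
    have hφmono : StrictMono φ := (Nat.orderEmbeddingOfSet _).strictMono
    have hSempty : ∀ j, Eh (φ j) = ∅ := by
      intro j
      have : φ j ∈ {h : ℕ | Eh h = ∅} := by
        rw [← Nat.orderEmbeddingOfSet_range {h : ℕ | Eh h = ∅}]
        exact mem_range_self j
      exact this
    refine ⟨∅, ⟨isClosed_empty, Bornology.isBounded_empty, ?_⟩, φ, hφmono, ⟨?_, ?_⟩, ?_⟩
    · intro p hp
      simp at hp
    · intro p ψ x hψ hx hxp
      have h0 : x 0 ∈ Eh (φ (ψ 0)) := hx 0
      rw [hSempty (ψ 0)] at h0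
      exact absurd h0 (notMem_empty _)
    · intro p hp
      exact absurd hp (notMem_empty _)
    · have hz : ∀ j, (fun x => |(Eh (φ j)).indicator (fun _ => (1:ℝ)) x -
          (∅ : Set (En n)).indicator (fun _ => (1:ℝ)) x|) = fun _ => (0:ℝ) := by
        intro j; funext x; simp [hSempty j]
      unfold L1Conv
      simp only [hz, integral_zero]
      exact tendsto_const_nhds
  · -- main case: eventually all sets are nonempty
    obtain ⟨N, hN⟩ : ∃ N, ∀ h ≥ N, (Eh h).Nonempty := by
      rw [Set.not_infinite] at hinf
      rcases hinf.bddAbove with ⟨N, hNb⟩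
      refine ⟨N + 1, fun h hh => ?_⟩
      rw [nonempty_iff_ne_empty]
      intro hemp
      exact absurd (hNb hemp) (by omega)
    set K : Set (En n) := closedBall (0 : En n) M with hKdef
    have hEhK : ∀ h, Eh h ⊆ K := fun h => (hbd h).trans ball_subset_closedBall
    have hKc : IsCompact K := isCompact_closedBall _ _
    haveI : CompactSpace K := isCompact_iff_compactSpace.1 hKc
    have hCne : ∀ h : ℕ, (Subtype.val ⁻¹' (Eh (h + N)) : Set K).Nonempty := by
      intro h
      obtain ⟨x, hx⟩ := hN (h + N) le_add_self
      exact ⟨⟨x, hEhK _ hx⟩, hx⟩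
    set C : ℕ → TopologicalSpace.NonemptyCompacts K := fun h =>
      ⟨⟨Subtype.val ⁻¹' (Eh (h + N)),
        (((hEh (h + N)).1.preimage continuous_subtype_val)).isCompact⟩, hCne h⟩ with hCdef
    obtain ⟨L, -, σ, hσ, hLconv⟩ := isCompact_univ.tendsto_subseq (fun k => mem_univ (C k))
    set E : Set (En n) := Subtype.val '' (L : Set K) with hEdef
    have hEK : E ⊆ K := by rintro _ ⟨y, -, rfl⟩; exact y.2
    have himg : ∀ h, Subtype.val '' ((C h : Set K)) = Eh (h + N) := by
      intro h
      show Subtype.val '' (Subtype.val ⁻¹' (Eh (h + N))) = Eh (h + N)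
      rw [Subtype.image_preimage_coe]
      exact inter_eq_self_of_subset_right (hEhK (h + N))
    have hLcpt : IsCompact (L : Set K) := L.toCompacts.2
    have hEcl : IsClosed E := (hLcpt.image continuous_subtype_val).isClosed
    have hEbd : Bornology.IsBounded E := hKc.isBounded.subset hEK
    have hEne : E.Nonempty := L.nonempty.image _
    set φ : ℕ → ℕ := fun j => σ j + N with hφdef
    have hφmono : StrictMono φ := fun a b h => by
      have := hσ h; simp only [hφdef]; omega
    have hSne : ∀ j, (Eh (φ j)).Nonempty := fun j => hN (σ j + N) le_add_self
    have hScomp : ∀ j, IsCompact (Eh (φ j)) := fun j =>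
      isCompact_of_isClosed_isBounded (hEh (φ j)).1 ((hEh (φ j)).2.1)
    have hfin : ∀ j, EMetric.hausdorffEdist (Eh (φ j)) E ≠ ⊤ := fun j =>
      hausdorffEdist_ne_top_of_nonempty_of_bounded (hSne j) hEne ((hEh (φ j)).2.1) hEbd
    set ε : ℕ → ℝ := fun j => hausdorffDist (Eh (φ j)) E with hεdef
    have hε1 : ∀ j, ∀ x ∈ Eh (φ j), infDist x E ≤ ε j := fun j x hx =>
      infDist_le_hausdorffDist_of_mem hx (hfin j)
    have hε2 : ∀ j, ∀ x ∈ E, infDist x (Eh (φ j)) ≤ ε j := by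
      intro j x hx
      have h1 : infDist x (Eh (φ j)) ≤ hausdorffDist E (Eh (φ j)) :=
        infDist_le_hausdorffDist_of_mem hx (by rw [EMetric.hausdorffEdist_comm]; exact hfin j)
      rwa [hausdorffDist_comm] at h1
    have hε0 : Tendsto ε atTop (𝓝 0) := by
      have h1 : Tendsto (fun j => dist (C (σ j)) L) atTop (𝓝 0) := by
        have := hLconv.dist
          (tendsto_const_nhds : Tendsto (fun _ : ℕ => L) atTop (𝓝 L))
        simpa using this
      apply h1.congr
      intro j
      calc dist (C (σ j)) L = hausdorffDist ((C (σ j)) : Set K) (L : Set K) :=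
            Metric.NonemptyCompacts.dist_eq
        _ = hausdorffDist (Subtype.val '' ((C (σ j)) : Set K)) (Subtype.val '' (L : Set K)) :=
            (hausdorffDist_image isometry_subtype_coe).symm
        _ = ε j := by rw [himg (σ j)]
    have hUR : E ∈ UR n R := by
      refine ⟨hEcl, hEbd, ?_⟩
      intro p hp
      have hpE : p ∈ E := hEcl.frontier_subset hp
      have hw : ∀ k : ℕ, ∃ j, ε j ≤ 1/(k+1) ∧
          ∃ w ∈ frontier (Eh (φ j)), dist w p ≤ 1/(k+1) := by
        intro k
        have hk3 : (0:ℝ) < 1/(3*((k:ℝ)+1)) := by positivity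
        have hpc : p ∈ closure Eᶜ := by
          rw [frontier_eq_closure_inter_closure] at hp; exact hp.2
        obtain ⟨z, hzE, hzd⟩ := Metric.mem_closure_iff.1 hpc _ hk3
        have hdz : 0 < infDist z E := (hEcl.notMem_iff_infDist_pos hEne).1 hzE
        obtain ⟨j, hj⟩ := (hε0.eventually_lt_const (lt_min hdz hk3)).exists
        have hjd : ε j < infDist z E := lt_of_lt_of_le hj (min_le_left _ _)
        have hjk : ε j < 1/(3*((k:ℝ)+1)) := lt_of_lt_of_le hj (min_le_right _ _)
        have hzS : z ∉ Eh (φ j) := fun hmem => absurd (hε1 j z hmem) (not_le.2 hjd)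
        obtain ⟨w, hwf, hwd⟩ := exists_frontier_infDist (hScomp j) (hSne j) hzS
        have hzd' : infDist z (Eh (φ j)) ≤ ε j + dist z p :=
          calc infDist z (Eh (φ j)) ≤ infDist p (Eh (φ j)) + dist z p :=
                infDist_le_infDist_add_dist
            _ ≤ ε j + dist z p := by linarith [hε2 j p hpE]
        have hzp : dist z p < 1/(3*((k:ℝ)+1)) := by rwa [dist_comm] at hzd
        have hkeq : (1:ℝ)/((k:ℝ)+1) = 3 * (1/(3*((k:ℝ)+1))) := by
          field_simp
        refine ⟨j, by rw [hkeq]; linarith, w, hwf, ?_⟩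
        calc dist w p ≤ dist w z + dist z p := dist_triangle _ _ _
          _ = dist z w + dist z p := by rw [dist_comm w z]
          _ ≤ (ε j + dist z p) + dist z p := by rw [hwd]; linarith
          _ ≤ 1/((k:ℝ)+1) := by rw [hkeq]; linarith
      obtain ⟨⟨q1, hq1, hb1⟩, ⟨q2, hq2, hb2⟩⟩ :=
        tangent_balls hR (fun j => (hEh (φ j)).1) (fun j => (hEh (φ j)).2.2)
          hEcl hEne ε hε1 hε2 hw
      exact ⟨q1, q2, hq1, hq2, hb1, hb2⟩
    refine ⟨E, hUR, φ, hφmono, ⟨?_, ?_⟩, ?_⟩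
    · -- Kuratowski (i)
      intro p ψ x hψ hx hxp
      have h1 : ∀ k, infDist p E ≤ ε (ψ k) + dist (x k) p := by
        intro k
        calc infDist p E ≤ infDist (x k) E + dist p (x k) := infDist_le_infDist_add_dist
          _ ≤ ε (ψ k) + dist (x k) p := by
              rw [dist_comm p (x k)]
              linarith [hε1 (ψ k) (x k) (hx k)]
      have h2 : Tendsto (fun k => ε (ψ k) + dist (x k) p) atTop (𝓝 0) := by
        have := (hε0.comp hψ.tendsto_atTop).add (tendsto_iff_dist_tendsto_zero.1 hxp)
        simpa using this
      have h3 : infDist p E ≤ 0 := ge_of_tendsto h2 (Eventually.of_forall h1)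
      have h4 : infDist p E = 0 := le_antisymm h3 infDist_nonneg
      have := (mem_closure_iff_infDist_zero hEne).2 h4
      rwa [hEcl.closure_eq] at this
    · -- Kuratowski (ii)
      intro p hp
      have hch : ∀ j, ∃ y ∈ Eh (φ j), infDist p (Eh (φ j)) = dist p y :=
        fun j => (hScomp j).exists_infDist_eq_dist (hSne j) p
      choose x hx1 hx2 using hch
      refine ⟨x, hx1, ?_⟩
      rw [tendsto_iff_dist_tendsto_zero]
      apply squeeze_zero (fun j => dist_nonneg) _ hε0
      intro j
      rw [dist_comm, ← hx2 j]
      exact hε2 j p hp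
    · -- L¹ convergence
      have hBad := bad_null hR (le_trans one_le_two hn) hEcl.measurableSet
      have hpt : ∀ x : En n,
          x ∉ {y : En n | y ∈ E ∧ ∃ q : En n, dist y q = R ∧ ball q R ∩ E = ∅} →
          Tendsto (fun j => |(Eh (φ j)).indicator (fun _ => (1:ℝ)) x -
            E.indicator (fun _ => (1:ℝ)) x|) atTop (𝓝 0) := by
        intro x hxB
        by_cases hxE : x ∈ E
        · have hev : ∀ᶠ j in atTop, x ∈ Eh (φ j) := by
            by_contra hcon
            rw [Filter.not_eventually] at hcon
            have hw : ∀ k : ℕ, ∃ j, ε j ≤ 1/(k+1) ∧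
                ∃ w ∈ frontier (Eh (φ j)), dist w x ≤ 1/(k+1) := by
              intro k
              have hk : (0:ℝ) < 1/((k:ℝ)+1) := by positivity
              obtain ⟨j, hj1, hj2⟩ := (hcon.and_eventually (hε0.eventually_lt_const hk)).exists
              obtain ⟨w, hwf, hwd⟩ := exists_frontier_infDist (hScomp j) (hSne j) hj1
              refine ⟨j, hj2.le, w, hwf, ?_⟩
              rw [dist_comm]
              calc dist x w = infDist x (Eh (φ j)) := hwd
                _ ≤ ε j := hε2 j x hxE
                _ ≤ 1/((k:ℝ)+1) := hj2.le
            obtain ⟨-, q, hq1, hq2⟩ :=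
              tangent_balls hR (fun j => (hEh (φ j)).1) (fun j => (hEh (φ j)).2.2)
                hEcl hEne ε hε1 hε2 hw
            exact hxB ⟨hxE, q, hq1, hq2⟩
          have heq : (fun j => |(Eh (φ j)).indicator (fun _ => (1:ℝ)) x -
              E.indicator (fun _ => (1:ℝ)) x|) =ᶠ[atTop] (fun _ => (0:ℝ)) := by
            filter_upwards [hev] with j hj
            simp [Set.indicator_of_mem hj, Set.indicator_of_mem hxE]
          exact Tendsto.congr' heq.symm tendsto_const_nhds
        · have hev : ∀ᶠ j in atTop, x ∉ Eh (φ j) := by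
            by_contra hcon
            rw [Filter.not_eventually] at hcon
            have h0 : infDist x E ≤ 0 := by
              by_contra h
              push_neg at h
              obtain ⟨j, hj1, hj2⟩ := (hcon.and_eventually (hε0.eventually_lt_const h)).exists
              exact absurd (hε1 j x (not_not.1 hj1)) (not_le.2 hj2)
            have h4 : infDist x E = 0 := le_antisymm h0 infDist_nonneg
            have := (mem_closure_iff_infDist_zero hEne).2 h4
            rw [hEcl.closure_eq] at this
            exact hxE this
          have heq : (fun j => |(Eh (φ j)).indicator (fun _ => (1:ℝ)) x -
              E.indicator (fun _ => (1:ℝ)) x|) =ᶠ[atTop] (fun _ => (0:ℝ)) := by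
            filter_upwards [hev] with j hj
            simp [Set.indicator_of_notMem hj, Set.indicator_of_notMem hxE]
          exact Tendsto.congr' heq.symm tendsto_const_nhds
      have hmeasj : ∀ j, AEStronglyMeasurable (fun x => |(Eh (φ j)).indicator
          (fun _ => (1:ℝ)) x - E.indicator (fun _ => (1:ℝ)) x|) volume := by
        intro j
        apply Measurable.aestronglyMeasurable
        exact ((measurable_const.indicator (hEh (φ j)).1.measurableSet).sub
          (measurable_const.indicator hEcl.measurableSet)).abs
      have hbound : Integrable (K.indicator (fun _ => (1:ℝ))) volume := by
        rw [integrable_indicator_iff hKc.measurableSet]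
        exact integrableOn_const hKc.measure_lt_top.ne
      have hb : ∀ j, ∀ᵐ x : En n ∂volume, ‖|(Eh (φ j)).indicator (fun _ => (1:ℝ)) x -
          E.indicator (fun _ => (1:ℝ)) x|‖ ≤ K.indicator (fun _ => (1:ℝ)) x := by
        intro j
        apply Eventually.of_forall
        intro x
        rw [Real.norm_eq_abs, abs_abs]
        by_cases hxK : x ∈ K
        · rw [Set.indicator_of_mem hxK]
          by_cases h1 : x ∈ Eh (φ j) <;> by_cases h2 : x ∈ E <;>
            simp [Set.indicator_apply, h1, h2]
        · have h1 : x ∉ Eh (φ j) := fun h => hxK (hEhK _ h)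
          have h2 : x ∉ E := fun h => hxK (hEK h)
          rw [Set.indicator_of_notMem hxK, Set.indicator_of_notMem h1,
            Set.indicator_of_notMem h2]
          simp
      have hl : ∀ᵐ x : En n ∂volume, Tendsto (fun j => |(Eh (φ j)).indicator
          (fun _ => (1:ℝ)) x - E.indicator (fun _ => (1:ℝ)) x|) atTop
          (𝓝 ((fun _ => (0:ℝ)) x)) := by
        have hae : ∀ᵐ x : En n ∂volume,
            x ∉ {y : En n | y ∈ E ∧ ∃ q : En n, dist y q = R ∧ ball q R ∩ E = ∅} := by
          rw [ae_iff]
          simpa [not_not] using hBad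
        filter_upwards [hae] with x hx
        exact hpt x hx
      have hDCT := tendsto_integral_of_dominated_convergence (μ := volume)
        (K.indicator (fun _ => (1:ℝ))) hmeasj hbound hb hl
      unfold L1Conv
      simpa [integral_zero] using hDCT
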